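/- Let G be a P10-free graph with all induced odd cycles of length 7 and no comparable pair, with induced 7-cycle C. Suppose d ∈ D2 (distance 3 from C) has two neighbors x1, x2 in D1'' such that x1 has a neighbor in B_i and x2 has a neighbor in B_{i+3}. Then x1 has neighbors in both B_i and B_{i+2}, and x2 has neighbors in both B_{i+1} and B_{i+3}. -/

import Mathlib

open SimpleGraph

/-- `c` lists the vertices of an induced cycle of length `n` in `G`:
the map is injective and adjacency holds exactly between consecutive vertices. -/
def IsInducedCycle {V : Type*} (G : SimpleGraph V) (n : ℕ) (c : ZMod n → V) : Prop :=
  Function.Injective c ∧ ∀ i j, G.Adj (c i) (c j) ↔ (i = j + 1 ∨ j = i + 1)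

def HasInducedCycle {V : Type*} (G : SimpleGraph V) (n : ℕ) : Prop :=
  ∃ c : ZMod n → V, IsInducedCycle G n c

/-- `G` contains an induced path on `n` vertices. -/
def HasInducedPath {V : Type*} (G : SimpleGraph V) (n : ℕ) : Prop :=
  ∃ p : Fin n → V, Function.Injective p ∧
    ∀ i j, G.Adj (p i) (p j) ↔ (i.val + 1 = j.val ∨ j.val + 1 = i.val)

/-- no pair of distinct non-adjacent vertices with comparable neighborhoods. -/
def NoComparablePair {V : Type*} (G : SimpleGraph V) : Prop :=
  ∀ u v : V, u ≠ v → ¬ G.Adj u v →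
    ¬ (G.neighborSet u ⊆ G.neighborSet v ∨ G.neighborSet v ⊆ G.neighborSet u)

/-- every induced odd cycle of `G` has length 7. -/
def OddCyclesAre7 {V : Type*} (G : SimpleGraph V) : Prop :=
  ∀ n : ℕ, 3 ≤ n → Odd n → HasInducedCycle G n → n = 7

/-- distance from a vertex to an (induced) 7-cycle given by `c`. -/
noncomputable def distToCycle {V : Type*} (G : SimpleGraph V) (c : ZMod 7 → V) (x : V) : ℕ :=
  sInf {d : ℕ | ∃ i : ZMod 7, G.dist x (c i) = d}

/-- `A_i`: vertices whose neighborhood on the cycle is exactly `{c i}`. -/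
def Aset {V : Type*} (G : SimpleGraph V) (c : ZMod 7 → V) (i : ZMod 7) : Set V :=
  {x | G.neighborSet x ∩ Set.range c = {c i}}

/-- `B_i`: vertices whose neighborhood on the cycle is exactly `{c (i-1), c (i+1)}`. -/
def Bset {V : Type*} (G : SimpleGraph V) (c : ZMod 7 → V) (i : ZMod 7) : Set V :=
  {x | G.neighborSet x ∩ Set.range c = {c (i - 1), c (i + 1)}}

/-- the closed neighborhood `N[C]` of the cycle. -/
def closedNbhd {V : Type*} (G : SimpleGraph V) (c : ZMod 7 → V) : Set V :=
  Set.range c ∪ {x | ∃ i : ZMod 7, G.Adj x (c i)}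

set_option maxHeartbeats 1000000 in
lemma falseOfC3 {V : Type*} {G : SimpleGraph V} (hodd : OddCyclesAre7 G)
    {u v w : V} (auv : G.Adj u v) (avw : G.Adj v w) (auw : G.Adj u w) : False := by
  have avu := auv.symm; have awv := avw.symm; have awu := auw.symm
  set p : ZMod 3 → V := fun n => if n = 0 then u else if n = 1 then v else w with hp
  have e0 : p 0 = u := rfl
  have e1 : p 1 = v := rfl
  have e2 : p 2 = w := rfl
  have hiff : ∀ a b : ZMod 3, G.Adj (p a) (p b) ↔ (a = b + 1 ∨ b = a + 1) := by
    have hcase : ∀ k : ZMod 3, k = 0 ∨ k = 1 ∨ k = 2 := by decide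
    intro a b
    rcases hcase a with rfl | rfl | rfl <;> rcases hcase b with rfl | rfl | rfl <;>
      simp only [e0, e1, e2] <;>
      first
        | exact iff_of_false G.irrefl (by decide)
        | exact iff_of_true (by assumption) (by decide)
        | exact iff_of_false (by assumption) (by decide)
  have hinj : Function.Injective p := by
    intro a b hab
    by_contra hne
    obtain ⟨k, hk⟩ : ∃ k : ZMod 3,
        ((a = k + 1 ∨ k = a + 1) ∧ ¬(b = k + 1 ∨ k = b + 1)) ∨
        ((b = k + 1 ∨ k = b + 1) ∧ ¬(a = k + 1 ∨ k = a + 1)) := by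
      revert hne
      have H : ∀ a b : ZMod 3, a ≠ b → ∃ k : ZMod 3,
        ((a = k + 1 ∨ k = a + 1) ∧ ¬(b = k + 1 ∨ k = b + 1)) ∨
        ((b = k + 1 ∨ k = b + 1) ∧ ¬(a = k + 1 ∨ k = a + 1)) := by decide
      exact fun h => H a b h
    rcases hk with ⟨hk1, hk2⟩ | ⟨hk1, hk2⟩
    · exact hk2 ((hiff b k).1 (hab ▸ (hiff a k).2 hk1))
    · exact hk2 ((hiff a k).1 (hab.symm ▸ (hiff b k).2 hk1))
  have h7 := hodd 3 (by norm_num) (by decide) ⟨p, hinj, hiff⟩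
  norm_num at h7

set_option maxHeartbeats 1000000 in
lemma falseOfC5 {V : Type*} {G : SimpleGraph V} (hodd : OddCyclesAre7 G)
    {v0 v1 v2 v3 v4 : V}
    (a01 : G.Adj v0 v1) (a12 : G.Adj v1 v2) (a23 : G.Adj v2 v3) (a34 : G.Adj v3 v4)
    (a40 : G.Adj v4 v0)
    (n02 : ¬G.Adj v0 v2) (n03 : ¬G.Adj v0 v3) (n13 : ¬G.Adj v1 v3) (n14 : ¬G.Adj v1 v4)
    (n24 : ¬G.Adj v2 v4) : False := by
  have a10 := a01.symm; have a21 := a12.symm; have a32 := a23.symm; have a43 := a34.symm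
  have a04 := a40.symm
  have n20 : ¬G.Adj v2 v0 := fun h => n02 h.symm
  have n30 : ¬G.Adj v3 v0 := fun h => n03 h.symm
  have n31 : ¬G.Adj v3 v1 := fun h => n13 h.symm
  have n41 : ¬G.Adj v4 v1 := fun h => n14 h.symm
  have n42 : ¬G.Adj v4 v2 := fun h => n24 h.symm
  set p : ZMod 5 → V := fun n =>
    if n = 0 then v0 else if n = 1 then v1 else if n = 2 then v2 else if n = 3 then v3 else v4
    with hp
  have e0 : p 0 = v0 := rfl
  have e1 : p 1 = v1 := rfl
  have e2 : p 2 = v2 := rfl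
  have e3 : p 3 = v3 := rfl
  have e4 : p 4 = v4 := rfl
  have hiff : ∀ a b : ZMod 5, G.Adj (p a) (p b) ↔ (a = b + 1 ∨ b = a + 1) := by
    have hcase : ∀ k : ZMod 5, k = 0 ∨ k = 1 ∨ k = 2 ∨ k = 3 ∨ k = 4 := by decide
    intro a b
    rcases hcase a with rfl | rfl | rfl | rfl | rfl <;>
      rcases hcase b with rfl | rfl | rfl | rfl | rfl <;>
      simp only [e0, e1, e2, e3, e4] <;>
      first
        | exact iff_of_false G.irrefl (by decide)
        | exact iff_of_true (by assumption) (by decide)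
        | exact iff_of_false (by assumption) (by decide)
  have hinj : Function.Injective p := by
    intro a b hab
    by_contra hne
    obtain ⟨k, hk⟩ : ∃ k : ZMod 5,
        ((a = k + 1 ∨ k = a + 1) ∧ ¬(b = k + 1 ∨ k = b + 1)) ∨
        ((b = k + 1 ∨ k = b + 1) ∧ ¬(a = k + 1 ∨ k = a + 1)) := by
      revert hne
      have H : ∀ a b : ZMod 5, a ≠ b → ∃ k : ZMod 5,
        ((a = k + 1 ∨ k = a + 1) ∧ ¬(b = k + 1 ∨ k = b + 1)) ∨
        ((b = k + 1 ∨ k = b + 1) ∧ ¬(a = k + 1 ∨ k = a + 1)) := by decide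
      exact fun h => H a b h
    rcases hk with ⟨hk1, hk2⟩ | ⟨hk1, hk2⟩
    · exact hk2 ((hiff b k).1 (hab ▸ (hiff a k).2 hk1))
    · exact hk2 ((hiff a k).1 (hab.symm ▸ (hiff b k).2 hk1))
  have h7 := hodd 5 (by norm_num) (by decide) ⟨p, hinj, hiff⟩
  norm_num at h7

set_option maxHeartbeats 4000000 in
lemma falseOfP10 {V : Type*} {G : SimpleGraph V} (hP : ¬ HasInducedPath G 10)
    {v0 v1 v2 v3 v4 v5 v6 v7 v8 v9 : V}
    (a01 : G.Adj v0 v1) (a12 : G.Adj v1 v2) (a23 : G.Adj v2 v3) (a34 : G.Adj v3 v4) (a45 : G.Adj v4 v5) (a56 : G.Adj v5 v6) (a67 : G.Adj v6 v7) (a78 : G.Adj v7 v8) (a89 : G.Adj v8 v9)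
    (n02 : ¬G.Adj v0 v2) (n03 : ¬G.Adj v0 v3) (n04 : ¬G.Adj v0 v4) (n05 : ¬G.Adj v0 v5) 
    (n06 : ¬G.Adj v0 v6) (n07 : ¬G.Adj v0 v7) (n08 : ¬G.Adj v0 v8) (n09 : ¬G.Adj v0 v9) 
    (n13 : ¬G.Adj v1 v3) (n14 : ¬G.Adj v1 v4) (n15 : ¬G.Adj v1 v5) (n16 : ¬G.Adj v1 v6) 
    (n17 : ¬G.Adj v1 v7) (n18 : ¬G.Adj v1 v8) (n19 : ¬G.Adj v1 v9) (n24 : ¬G.Adj v2 v4) 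
    (n25 : ¬G.Adj v2 v5) (n26 : ¬G.Adj v2 v6) (n27 : ¬G.Adj v2 v7) (n28 : ¬G.Adj v2 v8) 
    (n29 : ¬G.Adj v2 v9) (n35 : ¬G.Adj v3 v5) (n36 : ¬G.Adj v3 v6) (n37 : ¬G.Adj v3 v7) 
    (n38 : ¬G.Adj v3 v8) (n39 : ¬G.Adj v3 v9) (n46 : ¬G.Adj v4 v6) (n47 : ¬G.Adj v4 v7) 
    (n48 : ¬G.Adj v4 v8) (n49 : ¬G.Adj v4 v9) (n57 : ¬G.Adj v5 v7) (n58 : ¬G.Adj v5 v8) 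
    (n59 : ¬G.Adj v5 v9) (n68 : ¬G.Adj v6 v8) (n69 : ¬G.Adj v6 v9) (n79 : ¬G.Adj v7 v9) : False := by
  have a10 := a01.symm
  have a21 := a12.symm
  have a32 := a23.symm
  have a43 := a34.symm
  have a54 := a45.symm
  have a65 := a56.symm
  have a76 := a67.symm
  have a87 := a78.symm
  have a98 := a89.symm
  have n20 : ¬G.Adj v2 v0 := fun h => n02 h.symm
  have n30 : ¬G.Adj v3 v0 := fun h => n03 h.symm
  have n40 : ¬G.Adj v4 v0 := fun h => n04 h.symm
  have n50 : ¬G.Adj v5 v0 := fun h => n05 h.symm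
  have n60 : ¬G.Adj v6 v0 := fun h => n06 h.symm
  have n70 : ¬G.Adj v7 v0 := fun h => n07 h.symm
  have n80 : ¬G.Adj v8 v0 := fun h => n08 h.symm
  have n90 : ¬G.Adj v9 v0 := fun h => n09 h.symm
  have n31 : ¬G.Adj v3 v1 := fun h => n13 h.symm
  have n41 : ¬G.Adj v4 v1 := fun h => n14 h.symm
  have n51 : ¬G.Adj v5 v1 := fun h => n15 h.symm
  have n61 : ¬G.Adj v6 v1 := fun h => n16 h.symm
  have n71 : ¬G.Adj v7 v1 := fun h => n17 h.symm
  have n81 : ¬G.Adj v8 v1 := fun h => n18 h.symm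
  have n91 : ¬G.Adj v9 v1 := fun h => n19 h.symm
  have n42 : ¬G.Adj v4 v2 := fun h => n24 h.symm
  have n52 : ¬G.Adj v5 v2 := fun h => n25 h.symm
  have n62 : ¬G.Adj v6 v2 := fun h => n26 h.symm
  have n72 : ¬G.Adj v7 v2 := fun h => n27 h.symm
  have n82 : ¬G.Adj v8 v2 := fun h => n28 h.symm
  have n92 : ¬G.Adj v9 v2 := fun h => n29 h.symm
  have n53 : ¬G.Adj v5 v3 := fun h => n35 h.symm
  have n63 : ¬G.Adj v6 v3 := fun h => n36 h.symm
  have n73 : ¬G.Adj v7 v3 := fun h => n37 h.symm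
  have n83 : ¬G.Adj v8 v3 := fun h => n38 h.symm
  have n93 : ¬G.Adj v9 v3 := fun h => n39 h.symm
  have n64 : ¬G.Adj v6 v4 := fun h => n46 h.symm
  have n74 : ¬G.Adj v7 v4 := fun h => n47 h.symm
  have n84 : ¬G.Adj v8 v4 := fun h => n48 h.symm
  have n94 : ¬G.Adj v9 v4 := fun h => n49 h.symm
  have n75 : ¬G.Adj v7 v5 := fun h => n57 h.symm
  have n85 : ¬G.Adj v8 v5 := fun h => n58 h.symm
  have n95 : ¬G.Adj v9 v5 := fun h => n59 h.symm
  have n86 : ¬G.Adj v8 v6 := fun h => n68 h.symm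
  have n96 : ¬G.Adj v9 v6 := fun h => n69 h.symm
  have n97 : ¬G.Adj v9 v7 := fun h => n79 h.symm
  set p : Fin 10 → V := fun n =>
    if n = 0 then v0 else if n = 1 then v1 else if n = 2 then v2 else if n = 3 then v3 else if n = 4 then v4 else if n = 5 then v5 else if n = 6 then v6 else if n = 7 then v7 else if n = 8 then v8 else v9
    with hp
  have e0 : p 0 = v0 := rfl
  have e1 : p 1 = v1 := rfl
  have e2 : p 2 = v2 := rfl
  have e3 : p 3 = v3 := rfl
  have e4 : p 4 = v4 := rfl
  have e5 : p 5 = v5 := rfl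
  have e6 : p 6 = v6 := rfl
  have e7 : p 7 = v7 := rfl
  have e8 : p 8 = v8 := rfl
  have e9 : p 9 = v9 := rfl
  have hiff : ∀ a b : Fin 10, G.Adj (p a) (p b) ↔ (a.val + 1 = b.val ∨ b.val + 1 = a.val) := by
    have hcase : ∀ k : Fin 10, k = 0 ∨ k = 1 ∨ k = 2 ∨ k = 3 ∨ k = 4 ∨ k = 5 ∨ k = 6 ∨ k = 7 ∨ k = 8 ∨ k = 9 := by decide
    intro a b
    rcases hcase a with rfl | rfl | rfl | rfl | rfl | rfl | rfl | rfl | rfl | rfl <;>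
      rcases hcase b with rfl | rfl | rfl | rfl | rfl | rfl | rfl | rfl | rfl | rfl <;>
      simp only [e0, e1, e2, e3, e4, e5, e6, e7, e8, e9] <;>
      first
        | exact iff_of_false G.irrefl (by decide)
        | exact iff_of_true (by assumption) (by decide)
        | exact iff_of_false (by assumption) (by decide)
  have hinj : Function.Injective p := by
    intro a b hab
    by_contra hne
    obtain ⟨k, hk⟩ : ∃ k : Fin 10,
        ((a.val + 1 = k.val ∨ k.val + 1 = a.val) ∧ ¬(b.val + 1 = k.val ∨ k.val + 1 = b.val)) ∨
        ((b.val + 1 = k.val ∨ k.val + 1 = b.val) ∧ ¬(a.val + 1 = k.val ∨ k.val + 1 = a.val)) := by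
      revert hne
      have H : ∀ a b : Fin 10, a ≠ b → ∃ k : Fin 10,
        ((a.val + 1 = k.val ∨ k.val + 1 = a.val) ∧ ¬(b.val + 1 = k.val ∨ k.val + 1 = b.val)) ∨
        ((b.val + 1 = k.val ∨ k.val + 1 = b.val) ∧ ¬(a.val + 1 = k.val ∨ k.val + 1 = a.val)) := by decide
      exact fun h => H a b h
    rcases hk with ⟨hk1, hk2⟩ | ⟨hk1, hk2⟩
    · exact hk2 ((hiff b k).1 (hab ▸ (hiff a k).2 hk1))
    · exact hk2 ((hiff a k).1 (hab.symm ▸ (hiff b k).2 hk1))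
  exact hP ⟨p, hinj, hiff⟩

lemma Bset_spec {V : Type*} {G : SimpleGraph V} {c : ZMod 7 → V} (hcinj : Function.Injective c)
    {j : ZMod 7} {b : V} (hb : b ∈ Bset G c j) :
    G.Adj b (c (j - 1)) ∧ G.Adj b (c (j + 1)) ∧ ∀ k, G.Adj b (c k) → k = j - 1 ∨ k = j + 1 := by
  have hb' : G.neighborSet b ∩ Set.range c = {c (j - 1), c (j + 1)} := hb
  refine ⟨?_, ?_, ?_⟩
  · have h : c (j - 1) ∈ G.neighborSet b ∩ Set.range c := by
      rw [hb']; exact Set.mem_insert _ _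
    exact h.1
  · have h : c (j + 1) ∈ G.neighborSet b ∩ Set.range c := by
      rw [hb']; exact Set.mem_insert_iff.2 (Or.inr rfl)
    exact h.1
  · intro k hk
    have h : c k ∈ G.neighborSet b ∩ Set.range c := ⟨hk, ⟨k, rfl⟩⟩
    rw [hb'] at h
    rcases Set.mem_insert_iff.1 h with h' | h'
    · exact Or.inl (hcinj h')
    · exact Or.inr (hcinj (Set.mem_singleton_iff.1 h'))

lemma Bset_intro {V : Type*} {G : SimpleGraph V} {c : ZMod 7 → V}
    {j : ZMod 7} {b : V} (h1 : G.Adj b (c (j - 1))) (h2 : G.Adj b (c (j + 1)))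
    (h3 : ∀ k, G.Adj b (c k) → k = j - 1 ∨ k = j + 1) : b ∈ Bset G c j := by
  show G.neighborSet b ∩ Set.range c = {c (j - 1), c (j + 1)}
  ext y
  constructor
  · rintro ⟨hy, k, rfl⟩
    rcases h3 k hy with rfl | rfl
    · exact Set.mem_insert _ _
    · exact Set.mem_insert_iff.2 (Or.inr rfl)
  · intro hy
    rcases Set.mem_insert_iff.1 hy with rfl | hy
    · exact ⟨h1, ⟨j - 1, rfl⟩⟩
    · rw [Set.mem_singleton_iff.1 hy]
      exact ⟨h2, ⟨j + 1, rfl⟩⟩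

set_option maxHeartbeats 4000000 in
lemma key {V : Type*} (G : SimpleGraph V)
    (hP : ¬ HasInducedPath G 10) (hodd : OddCyclesAre7 G)
    (hcomp : NoComparablePair G)
    (c : ZMod 7 → V) (hc : IsInducedCycle G 7 c)
    (d x1 x2 : V) (hd : distToCycle G c d = 3)
    (hx1 : distToCycle G c x1 = 2) (hx2 : distToCycle G c x2 = 2)
    (hne : x1 ≠ x2) (h1 : G.Adj d x1) (h2 : G.Adj d x2)
    (i : ZMod 7)
    (hb1 : ∃ b ∈ Bset G c i, G.Adj x1 b)
    (hb2 : ∃ b ∈ Bset G c (i + 3), G.Adj x2 b) :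
    ∃ b ∈ Bset G c (i + 2), G.Adj x1 b := by
  obtain ⟨b1, hb1B, hxb1⟩ := hb1
  obtain ⟨b2, hb2B, hxb2⟩ := hb2
  -- cycle adjacency helpers
  have cadj : ∀ a b : ZMod 7, (a = b + 1 ∨ b = a + 1) → G.Adj (c (i + a)) (c (i + b)) := by
    intro a b h
    rw [hc.2]
    rcases h with h | h
    · left; rw [h, add_assoc]
    · right; rw [h, add_assoc]
  have cnadj : ∀ a b : ZMod 7, ¬(a = b + 1 ∨ b = a + 1) → ¬ G.Adj (c (i + a)) (c (i + b)) := by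
    intro a b h hadj
    rw [hc.2] at hadj
    apply h
    rcases hadj with h' | h'
    · exact Or.inl (add_left_cancel (h'.trans (add_assoc i b 1)))
    · exact Or.inr (add_left_cancel (h'.trans (add_assoc i a 1)))
  have ci0 : c (i + 0) = c i := by rw [add_zero]
  have ca01 : G.Adj (c i) (c (i + 1)) := by have h := cadj 0 1 (by decide); rwa [ci0] at h
  have ca60 : G.Adj (c (i + 6)) (c i) := by have h := cadj 6 0 (by decide); rwa [ci0] at h
  have cn02 : ¬ G.Adj (c i) (c (i + 2)) := by have h := cnadj 0 2 (by decide); rwa [ci0] at h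
  have cn03 : ¬ G.Adj (c i) (c (i + 3)) := by have h := cnadj 0 3 (by decide); rwa [ci0] at h
  have cn04 : ¬ G.Adj (c i) (c (i + 4)) := by have h := cnadj 0 4 (by decide); rwa [ci0] at h
  have cn05 : ¬ G.Adj (c i) (c (i + 5)) := by have h := cnadj 0 5 (by decide); rwa [ci0] at h
  -- b1 facts
  have e6 : i - 1 = i + 6 := by rw [sub_eq_add_neg]; congr 1
  have hs1 := Bset_spec hc.1 hb1B
  have ab1c6 : G.Adj b1 (c (i + 6)) := by rw [← e6]; exact hs1.1
  have ab1c1 : G.Adj b1 (c (i + 1)) := hs1.2.1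
  have b1rule : ∀ k : ZMod 7, G.Adj b1 (c (i + k)) → k = 6 ∨ k = 1 := by
    intro k hk
    rcases hs1.2.2 (i + k) hk with h | h
    · rw [e6] at h; exact Or.inl (add_left_cancel h)
    · exact Or.inr (add_left_cancel h)
  have nb1c0 : ¬ G.Adj b1 (c i) := fun h => by
    rcases b1rule 0 (by rwa [ci0]) with h' | h' <;> exact absurd h' (by decide)
  have nb1c2 : ¬ G.Adj b1 (c (i + 2)) := fun h => by
    rcases b1rule 2 h with h' | h' <;> exact absurd h' (by decide)
  have nb1c3 : ¬ G.Adj b1 (c (i + 3)) := fun h => by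
    rcases b1rule 3 h with h' | h' <;> exact absurd h' (by decide)
  have nb1c4 : ¬ G.Adj b1 (c (i + 4)) := fun h => by
    rcases b1rule 4 h with h' | h' <;> exact absurd h' (by decide)
  have nb1c5 : ¬ G.Adj b1 (c (i + 5)) := fun h => by
    rcases b1rule 5 h with h' | h' <;> exact absurd h' (by decide)
  -- b2 facts
  have e32 : i + 3 - 1 = i + 2 := by ring
  have e34 : i + 3 + 1 = i + 4 := by ring
  have hs2 := Bset_spec hc.1 hb2B
  have ab2c2 : G.Adj b2 (c (i + 2)) := by rw [← e32]; exact hs2.1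
  have ab2c4 : G.Adj b2 (c (i + 4)) := by rw [← e34]; exact hs2.2.1
  have b2rule : ∀ k : ZMod 7, G.Adj b2 (c (i + k)) → k = 2 ∨ k = 4 := by
    intro k hk
    rcases hs2.2.2 (i + k) hk with h | h
    · rw [e32] at h; exact Or.inl (add_left_cancel h)
    · rw [e34] at h; exact Or.inr (add_left_cancel h)
  have nb2c0 : ¬ G.Adj b2 (c i) := fun h => by
    rcases b2rule 0 (by rwa [ci0]) with h' | h' <;> exact absurd h' (by decide)
  have nb2c1 : ¬ G.Adj b2 (c (i + 1)) := fun h => by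
    rcases b2rule 1 h with h' | h' <;> exact absurd h' (by decide)
  have nb2c3 : ¬ G.Adj b2 (c (i + 3)) := fun h => by
    rcases b2rule 3 h with h' | h' <;> exact absurd h' (by decide)
  have nb2c5 : ¬ G.Adj b2 (c (i + 5)) := fun h => by
    rcases b2rule 5 h with h' | h' <;> exact absurd h' (by decide)
  have nb2c6 : ¬ G.Adj b2 (c (i + 6)) := fun h => by
    rcases b2rule 6 h with h' | h' <;> exact absurd h' (by decide)
  -- distance facts
  have distc : ∀ (x : V) (m : ℕ), distToCycle G c x = m → ∀ j, m ≤ G.dist x (c j) := by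
    intro x m hm j
    rw [← hm]
    exact Nat.sInf_le ⟨j, rfl⟩
  have nadjc_x1 : ∀ j : ZMod 7, ¬ G.Adj x1 (c j) := by
    intro j h
    have hge := distc x1 2 hx1 j
    have hle := SimpleGraph.dist_le (SimpleGraph.Walk.cons h SimpleGraph.Walk.nil)
    simp at hle; omega
  have nadjc_x2 : ∀ j : ZMod 7, ¬ G.Adj x2 (c j) := by
    intro j h
    have hge := distc x2 2 hx2 j
    have hle := SimpleGraph.dist_le (SimpleGraph.Walk.cons h SimpleGraph.Walk.nil)
    simp at hle; omega
  have nd_c : ∀ j : ZMod 7, ¬ G.Adj d (c j) := by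
    intro j h
    have hge := distc d 3 hd j
    have hle := SimpleGraph.dist_le (SimpleGraph.Walk.cons h SimpleGraph.Walk.nil)
    simp at hle; omega
  have nadjd : ∀ (w : V) (j : ZMod 7), G.Adj w (c j) → ¬ G.Adj d w := by
    intro w j hw hdw
    have hge := distc d 3 hd j
    have hle := SimpleGraph.dist_le
      (SimpleGraph.Walk.cons hdw (SimpleGraph.Walk.cons hw SimpleGraph.Walk.nil))
    simp at hle; omega
  have ndb1 : ¬ G.Adj d b1 := nadjd b1 (i + 1) ab1c1
  have ndb2 : ¬ G.Adj d b2 := nadjd b2 (i + 2) ab2c2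
  -- derived mutual nonadjacencies
  have nx1x2 : ¬ G.Adj x1 x2 := fun h => falseOfC3 hodd h1 h h2
  have nb1b2 : ¬ G.Adj b1 b2 := fun h => falseOfC5 hodd ab1c6.symm h ab2c4
    (cadj 4 5 (by decide)) (cadj 5 6 (by decide)) (fun h' => nb2c6 h'.symm)
    (fun h' => (cnadj 4 6 (by decide)) h'.symm) nb1c4 nb1c5 nb2c5
  have nx1b2 : ¬ G.Adj x1 b2 := fun h => falseOfC5 hodd hxb1 ab1c1 (cadj 1 2 (by decide))
    ab2c2.symm h.symm (nadjc_x1 (i + 1)) (nadjc_x1 (i + 2)) nb1c2 nb1b2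
    (fun h' => nb2c1 h'.symm)
  have nx2b1 : ¬ G.Adj x2 b1 := fun h => falseOfC5 hodd h ab1c1 (cadj 1 2 (by decide))
    ab2c2.symm hxb2.symm (nadjc_x2 (i + 1)) (nadjc_x2 (i + 2)) nb1c2 nb1b2
    (fun h' => nb2c1 h'.symm)
  -- obtain z via no-comparable-pair applied to (b2, c (i+3))
  have hb2ne : b2 ≠ c (i + 3) := fun h => nadjc_x2 (i + 3) (h ▸ hxb2)
  have hb2nadj : ¬ G.Adj b2 (c (i + 3)) := fun h => by
    rcases b2rule 3 h with h' | h' <;> exact absurd h' (by decide)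
  have hcomp' := hcomp b2 (c (i + 3)) hb2ne hb2nadj
  push_neg at hcomp'
  obtain ⟨-, hns⟩ := hcomp'
  obtain ⟨z, hz1, hz2⟩ := Set.not_subset.1 hns
  have azc3 : G.Adj z (c (i + 3)) := (SimpleGraph.mem_neighborSet _ _ _ |>.1 hz1).symm
  have nzb2 : ¬ G.Adj z b2 := fun h => hz2 ((SimpleGraph.mem_neighborSet _ _ _).2 h.symm)
  have ndz : ¬ G.Adj d z := nadjd z (i + 3) azc3
  -- z cycle nonadjacencies
  have nzc2 : ¬ G.Adj z (c (i + 2)) := fun h => falseOfC3 hodd h (cadj 2 3 (by decide)) azc3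
  have nzc4 : ¬ G.Adj z (c (i + 4)) := fun h => falseOfC3 hodd azc3 (cadj 3 4 (by decide)) h
  have nzc0 : ¬ G.Adj z (c i) := by
    intro h
    have nzc1' : ¬ G.Adj z (c (i + 1)) := fun h' => falseOfC3 hodd h ca01 h'
    exact falseOfC5 hodd h ca01 (cadj 1 2 (by decide)) (cadj 2 3 (by decide)) azc3.symm
      nzc1' nzc2 cn02 cn03 (cnadj 1 3 (by decide))
  have nzc6 : ¬ G.Adj z (c (i + 6)) := by
    intro h
    have nzc5' : ¬ G.Adj z (c (i + 5)) := fun h' => falseOfC3 hodd h' (cadj 5 6 (by decide)) h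
    exact falseOfC5 hodd azc3 (cadj 3 4 (by decide)) (cadj 4 5 (by decide))
      (cadj 5 6 (by decide)) h.symm nzc4 nzc5' (cnadj 3 5 (by decide))
      (cnadj 3 6 (by decide)) (cnadj 4 6 (by decide))
  by_cases hzc1 : G.Adj z (c (i + 1))
  · -- z ∈ B_{i+2}
    have nzc5 : ¬ G.Adj z (c (i + 5)) := by
      intro h
      exact falseOfC5 hodd hzc1 ca01.symm ca60.symm (cadj 5 6 (by decide)).symm h.symm
        nzc0 nzc6 (cnadj 1 6 (by decide)) (cnadj 1 5 (by decide))
        cn05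
    have nzb1 : ¬ G.Adj z b1 := fun h => falseOfC3 hodd h ab1c1 hzc1
    have nzx2 : ¬ G.Adj z x2 := fun h => falseOfC5 hodd h hxb2 ab2c2
      (cadj 2 3 (by decide)) azc3.symm nzb2 nzc2 (nadjc_x2 (i + 2)) (nadjc_x2 (i + 3)) nb2c3
    have zmem : z ∈ Bset G c (i + 2) := by
      apply Bset_intro
      · rw [show i + 2 - 1 = i + 1 by ring]; exact hzc1
      · rw [show i + 2 + 1 = i + 3 by ring]; exact azc3
      · intro k hk
        have hsplit : ∀ a : ZMod 7,
            a = 0 ∨ a = 1 ∨ a = 2 ∨ a = 3 ∨ a = 4 ∨ a = 5 ∨ a = 6 := by decide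
        have hk2 : k = i + (k - i) := by ring
        rcases hsplit (k - i) with h | h | h | h | h | h | h <;> rw [h] at hk2 <;>
          rw [hk2] at hk ⊢
        · rw [ci0] at hk; exact absurd hk nzc0
        · left; ring
        · exact absurd hk nzc2
        · right; ring
        · exact absurd hk nzc4
        · exact absurd hk nzc5
        · exact absurd hk nzc6
    by_cases hzx1 : G.Adj x1 z
    · exact ⟨z, zmem, hzx1⟩
    · have nzx1 : ¬ G.Adj z x1 := fun h => hzx1 h.symm
      exact False.elim <| falseOfP10 hP ca60.symm ab1c6.symm hxb1.symm h1.symm h2 hxb2 ab2c2 (cadj 2 3 (by decide)) azc3.symm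
        (fun h => nb1c0 h.symm) (fun h => (nadjc_x1 i) h.symm) (fun h => (nd_c i) h.symm)
        (fun h => (nadjc_x2 i) h.symm) (fun h => nb2c0 h.symm) cn02 cn03 (fun h => nzc0 h.symm)
        (fun h => (nadjc_x1 (i + 6)) h.symm) (fun h => (nd_c (i + 6)) h.symm)
        (fun h => (nadjc_x2 (i + 6)) h.symm) (fun h => nb2c6 h.symm) (fun h => (cnadj 2 6 (by decide)) h.symm)
        (fun h => (cnadj 3 6 (by decide)) h.symm) (fun h => nzc6 h.symm) (fun h => ndb1 h.symm)
        (fun h => nx2b1 h.symm) nb1b2 nb1c2 nb1c3 (fun h => nzb1 h.symm) nx1x2 nx1b2 (nadjc_x1 (i + 2))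
        (nadjc_x1 (i + 3)) (fun h => nzx1 h.symm) ndb2 (nd_c (i + 2)) (nd_c (i + 3)) ndz (nadjc_x2 (i + 2))
        (nadjc_x2 (i + 3)) (fun h => nzx2 h.symm) nb2c3 (fun h => nzb2 h.symm) (fun h => nzc2 h.symm)
  · have nzc1 : ¬ G.Adj z (c (i + 1)) := hzc1
    by_cases hzc5 : G.Adj z (c (i + 5))
    · -- B_{i+4} case: contradiction
      have nzb1 : ¬ G.Adj z b1 := fun h => falseOfC5 hodd h ab1c1 (cadj 1 2 (by decide))
        (cadj 2 3 (by decide)) azc3.symm nzc1 nzc2 nb1c2 nb1c3 (cnadj 1 3 (by decide))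
      have nzx2 : ¬ G.Adj z x2 := fun h => falseOfC5 hodd h hxb2 ab2c2
        (cadj 2 3 (by decide)) azc3.symm nzb2 nzc2 (nadjc_x2 (i + 2)) (nadjc_x2 (i + 3)) nb2c3
      have nzx1 : ¬ G.Adj z x1 := fun h => falseOfC5 hodd hzc5 (cadj 5 6 (by decide))
        ab1c6.symm hxb1.symm h.symm nzc6 nzb1 (fun h' => nb1c5 h'.symm)
        (fun h' => (nadjc_x1 (i + 5)) h'.symm) (fun h' => (nadjc_x1 (i + 6)) h'.symm)
      exact False.elim <| falseOfP10 hP ca01 ab1c1.symm hxb1.symm h1.symm h2 hxb2 ab2c4 (cadj 3 4 (by decide)).symm azc3.symm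
        (fun h => nb1c0 h.symm) (fun h => (nadjc_x1 i) h.symm) (fun h => (nd_c i) h.symm)
        (fun h => (nadjc_x2 i) h.symm) (fun h => nb2c0 h.symm) cn04 cn03 (fun h => nzc0 h.symm)
        (fun h => (nadjc_x1 (i + 1)) h.symm) (fun h => (nd_c (i + 1)) h.symm)
        (fun h => (nadjc_x2 (i + 1)) h.symm) (fun h => nb2c1 h.symm) (cnadj 1 4 (by decide))
        (cnadj 1 3 (by decide)) (fun h => nzc1 h.symm) (fun h => ndb1 h.symm) (fun h => nx2b1 h.symm) nb1b2
        nb1c4 nb1c3 (fun h => nzb1 h.symm) nx1x2 nx1b2 (nadjc_x1 (i + 4)) (nadjc_x1 (i + 3))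
        (fun h => nzx1 h.symm) ndb2 (nd_c (i + 4)) (nd_c (i + 3)) ndz (nadjc_x2 (i + 4)) (nadjc_x2 (i + 3))
        (fun h => nzx2 h.symm) nb2c3 (fun h => nzb2 h.symm) (fun h => nzc4 h.symm)
    · -- A_{i+3} case: contradiction
      have nzc5 : ¬ G.Adj z (c (i + 5)) := hzc5
      have nzb1 : ¬ G.Adj z b1 := fun h => falseOfC5 hodd h ab1c1 (cadj 1 2 (by decide))
        (cadj 2 3 (by decide)) azc3.symm nzc1 nzc2 nb1c2 nb1c3 (cnadj 1 3 (by decide))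
      have nzx2 : ¬ G.Adj z x2 := fun h => falseOfC5 hodd h hxb2 ab2c2
        (cadj 2 3 (by decide)) azc3.symm nzb2 nzc2 (nadjc_x2 (i + 2)) (nadjc_x2 (i + 3)) nb2c3
      by_cases hzx1A : G.Adj z x1
      · exact False.elim <| falseOfP10 hP ca01.symm ca60.symm (cadj 5 6 (by decide)).symm (cadj 4 5 (by decide)).symm
          (cadj 3 4 (by decide)).symm azc3.symm hzx1A h1.symm h2 (cnadj 1 6 (by decide)) (cnadj 1 5 (by decide))
          (cnadj 1 4 (by decide)) (cnadj 1 3 (by decide)) (fun h => nzc1 h.symm)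
          (fun h => (nadjc_x1 (i + 1)) h.symm) (fun h => (nd_c (i + 1)) h.symm)
          (fun h => (nadjc_x2 (i + 1)) h.symm) cn05 cn04 cn03 (fun h => nzc0 h.symm)
          (fun h => (nadjc_x1 i) h.symm) (fun h => (nd_c i) h.symm) (fun h => (nadjc_x2 i) h.symm)
          (fun h => (cnadj 4 6 (by decide)) h.symm) (fun h => (cnadj 3 6 (by decide)) h.symm)
          (fun h => nzc6 h.symm) (fun h => (nadjc_x1 (i + 6)) h.symm) (fun h => (nd_c (i + 6)) h.symm)
          (fun h => (nadjc_x2 (i + 6)) h.symm) (fun h => (cnadj 3 5 (by decide)) h.symm) (fun h => nzc5 h.symm)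
          (fun h => (nadjc_x1 (i + 5)) h.symm) (fun h => (nd_c (i + 5)) h.symm)
          (fun h => (nadjc_x2 (i + 5)) h.symm) (fun h => nzc4 h.symm) (fun h => (nadjc_x1 (i + 4)) h.symm)
          (fun h => (nd_c (i + 4)) h.symm) (fun h => (nadjc_x2 (i + 4)) h.symm)
          (fun h => (nadjc_x1 (i + 3)) h.symm) (fun h => (nd_c (i + 3)) h.symm)
          (fun h => (nadjc_x2 (i + 3)) h.symm) (fun h => ndz h.symm) nzx2 nx1x2
      · have nzx1 : ¬ G.Adj z x1 := hzx1A
        exact False.elim <| falseOfP10 hP ca01 ab1c1.symm hxb1.symm h1.symm h2 hxb2 ab2c4 (cadj 3 4 (by decide)).symm azc3.symm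
          (fun h => nb1c0 h.symm) (fun h => (nadjc_x1 i) h.symm) (fun h => (nd_c i) h.symm)
          (fun h => (nadjc_x2 i) h.symm) (fun h => nb2c0 h.symm) cn04 cn03 (fun h => nzc0 h.symm)
          (fun h => (nadjc_x1 (i + 1)) h.symm) (fun h => (nd_c (i + 1)) h.symm)
          (fun h => (nadjc_x2 (i + 1)) h.symm) (fun h => nb2c1 h.symm) (cnadj 1 4 (by decide))
          (cnadj 1 3 (by decide)) (fun h => nzc1 h.symm) (fun h => ndb1 h.symm) (fun h => nx2b1 h.symm) nb1b2
          nb1c4 nb1c3 (fun h => nzb1 h.symm) nx1x2 nx1b2 (nadjc_x1 (i + 4)) (nadjc_x1 (i + 3))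
          (fun h => nzx1 h.symm) ndb2 (nd_c (i + 4)) (nd_c (i + 3)) ndz (nadjc_x2 (i + 4)) (nadjc_x2 (i + 3))
          (fun h => nzx2 h.symm) nb2c3 (fun h => nzb2 h.symm) (fun h => nzc4 h.symm)


theorem stmt16 {V : Type*} [Fintype V] (G : SimpleGraph V)
    (hP : ¬ HasInducedPath G 10) (hodd : OddCyclesAre7 G)
    (hcomp : NoComparablePair G)
    (c : ZMod 7 → V) (hc : IsInducedCycle G 7 c)
    (d x1 x2 : V) (hd : distToCycle G c d = 3)
    (hx1 : distToCycle G c x1 = 2) (hx2 : distToCycle G c x2 = 2)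
    (hne : x1 ≠ x2) (h1 : G.Adj d x1) (h2 : G.Adj d x2)
    (i : ZMod 7)
    (hb1 : ∃ b ∈ Bset G c i, G.Adj x1 b)
    (hb2 : ∃ b ∈ Bset G c (i + 3), G.Adj x2 b) :
    (∃ b ∈ Bset G c i, G.Adj x1 b) ∧ (∃ b ∈ Bset G c (i + 2), G.Adj x1 b) ∧
    (∃ b ∈ Bset G c (i + 1), G.Adj x2 b) ∧ (∃ b ∈ Bset G c (i + 3), G.Adj x2 b) := by
  refine ⟨hb1, key G hP hodd hcomp c hc d x1 x2 hd hx1 hx2 hne h1 h2 i hb1 hb2, ?_, hb2⟩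
  -- mirrored cycle
  set c' : ZMod 7 → V := fun j => c (2 * i + 3 - j) with hcdef
  have hc'app : ∀ j, c' j = c (2 * i + 3 - j) := fun j => rfl
  have hinj' : Function.Injective c' := by
    intro a b hab
    have h := hc.1 hab
    linear_combination -h
  have hadj' : ∀ p q, G.Adj (c' p) (c' q) ↔ (p = q + 1 ∨ q = p + 1) := by
    intro p q
    rw [hc'app, hc'app, hc.2]
    constructor
    · rintro (h | h)
      · right; linear_combination h
      · left; linear_combination h
    · rintro (h | h)
      · right; linear_combination h
      · left; linear_combination h
  have hrange : Set.range c' = Set.range c := by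
    ext y
    constructor
    · rintro ⟨j, rfl⟩; exact ⟨2 * i + 3 - j, rfl⟩
    · rintro ⟨j, rfl⟩
      exact ⟨2 * i + 3 - j, by rw [hc'app]; exact congrArg c (by ring)⟩
  have hBset : ∀ j : ZMod 7, Bset G c' j = Bset G c (2 * i + 3 - j) := by
    intro j
    unfold Bset
    rw [hrange]
    have e1 : c' (j - 1) = c ((2 * i + 3 - j) + 1) := congrArg c (by ring)
    have e2 : c' (j + 1) = c ((2 * i + 3 - j) - 1) := congrArg c (by ring)
    rw [e1, e2, Set.pair_comm]
  have hdist : ∀ x, distToCycle G c' x = distToCycle G c x := by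
    intro x
    unfold distToCycle
    congr 1
    ext m
    constructor
    · rintro ⟨j, hj⟩; exact ⟨2 * i + 3 - j, hj⟩
    · rintro ⟨j, hj⟩
      refine ⟨2 * i + 3 - j, ?_⟩
      rw [hc'app]
      rw [show 2 * i + 3 - (2 * i + 3 - j) = j by ring]
      exact hj
  have m1 : ∃ b ∈ Bset G c' i, G.Adj x2 b := by
    rw [hBset, show 2 * i + 3 - i = i + 3 by ring]; exact hb2
  have m2 : ∃ b ∈ Bset G c' (i + 3), G.Adj x1 b := by
    rw [hBset, show 2 * i + 3 - (i + 3) = i by ring]; exact hb1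
  have hkey2 := key G hP hodd hcomp c' ⟨hinj', hadj'⟩ d x2 x1
    (by rw [hdist]; exact hd) (by rw [hdist]; exact hx2) (by rw [hdist]; exact hx1)
    hne.symm h2 h1 i m1 m2
  rw [hBset, show 2 * i + 3 - (i + 2) = i + 1 by ring] at hkey2
  exact hkey2
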